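/- Let α > 0, k > 1, δ > 0, Ω ⊂ ℝ^N measurable, and x ∈ ℝ^N \ Ω with r = dist(x, ∂Ω). If |B_{kr}(x) ∩ Ω| ≥ δ |B_{kr}(x)|, then I_Ω^α(x) = ∫_Ω |x−y|^{−(N+α)} dy ≥ c · r^{−α}, where c > 0 depends only on N, k, δ (and not on x or r). -/

import Mathlib

open MeasureTheory Metric

theorem stmt1 (N : ℕ) (hN : 0 < N) (α k δ : ℝ) (hα : 0 < α) (hk : 1 < k) (hδ : 0 < δ) :
    ∃ c > 0, ∀ Ω : Set (EuclideanSpace ℝ (Fin N)), MeasurableSet Ω →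
      ∀ x ∉ Ω, ∀ r : ℝ, r = Metric.infDist x (frontier Ω) →
        ENNReal.ofReal δ * volume (ball x (k * r)) ≤ volume (ball x (k * r) ∩ Ω) →
        c * r ^ (-α) ≤ ∫ y in Ω, ‖x - y‖ ^ (-((N : ℝ) + α)) := by
  classical
  set E := EuclideanSpace ℝ (Fin N)
  set V : ℝ := (volume (ball (0 : E) 1)).toReal with hV
  have hVpos : 0 < V :=
    ENNReal.toReal_pos (measure_ball_pos _ _ one_pos).ne' measure_ball_lt_top.ne
  have hkpos : (0:ℝ) < k := lt_trans one_pos hk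
  refine ⟨δ * V * k ^ (-α), by positivity, ?_⟩
  intro Ω hΩ x hx r hr hvol
  have hr0 : 0 ≤ r := hr ▸ Metric.infDist_nonneg
  rcases hr0.eq_or_lt with h0 | hrpos
  · rw [← h0, Real.zero_rpow (by linarith : -α ≠ 0), mul_zero]
    exact setIntegral_nonneg hΩ fun y _ => Real.rpow_nonneg (norm_nonneg _) _
  have hkr : 0 < k * r := mul_pos hkpos hrpos
  set s : ℝ := (N : ℝ) + α with hs
  have hspos : 0 < s := by positivity
  -- Ω avoids the ball of radius r around x
  have hav : ∀ y ∈ Ω, r ≤ dist x y := by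
    intro y hy
    by_contra h
    push_neg at h
    have hb : y ∈ ball x r := by rwa [mem_ball, dist_comm]
    have hconn : IsPreconnected (ball x r) := (convex_ball x r).isPreconnected
    have hcover : ball x r ⊆ interior Ω ∪ (closure Ω)ᶜ := by
      intro z hz
      have hz' : z ∉ frontier Ω := by
        intro hzf
        have h1 : r ≤ dist x z := hr ▸ Metric.infDist_le_dist_of_mem hzf
        have h2 : dist x z < r := by rwa [mem_ball, dist_comm] at hz
        linarith
      rcases em (z ∈ closure Ω) with hc | hc
      · left
        by_contra hi
        exact hz' ⟨hc, hi⟩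
      · right; exact hc
    have hdisj : Disjoint (interior Ω) (closure Ω)ᶜ :=
      Set.disjoint_left.mpr fun z hz hz' => hz' (interior_subset_closure hz)
    rcases hconn.subset_or_subset isOpen_interior isClosed_closure.isOpen_compl hdisj hcover
      with h1 | h2
    · exact hx (interior_subset (h1 (mem_ball_self hrpos)))
    · exact (h2 hb) (subset_closure hy)
  -- integrability
  have hmeas : Measurable (fun y : E => ‖x - y‖ ^ (-s)) := by fun_prop
  have hint1 : Integrable (fun y : E => (1 + ‖y‖) ^ (-s)) := by
    apply integrable_one_add_norm
    rw [finrank_euclideanSpace_fin]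
    linarith
  have hint2 : Integrable (fun y : E => (1 + ‖x - y‖) ^ (-s)) :=
    (integrable_comp_sub_left (fun y : E => (1 + ‖y‖) ^ (-s)) x).mpr hint1
  set C : ℝ := ((1 + r) / r) ^ s with hC
  have hint3 : IntegrableOn (fun y : E => ‖x - y‖ ^ (-s)) Ω := by
    apply Integrable.mono' ((hint2.const_mul C).restrict (s := Ω))
      hmeas.aestronglyMeasurable.restrict
    rw [ae_restrict_iff' hΩ]
    filter_upwards with y hy
    set t : ℝ := ‖x - y‖ with ht'
    have htr : r ≤ t := by rw [ht', ← dist_eq_norm]; exact hav y hy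
    have ht : 0 < t := lt_of_lt_of_le hrpos htr
    rw [Real.norm_eq_abs, abs_of_nonneg (Real.rpow_nonneg (norm_nonneg _) _)]
    have key : t ^ (-s) = ((1 + t) / t) ^ s * (1 + t) ^ (-s) := by
      have e1 : ((1:ℝ) + t) ^ s ≠ 0 := ne_of_gt (Real.rpow_pos_of_pos (by positivity) _)
      have e2 : t ^ s ≠ 0 := ne_of_gt (Real.rpow_pos_of_pos ht _)
      rw [Real.div_rpow (by positivity) ht.le, Real.rpow_neg ht.le,
        Real.rpow_neg (by positivity : (0:ℝ) ≤ 1 + t)]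
      field_simp
    rw [key]
    have h1 : ((1 + t) / t) ^ s ≤ C := by
      apply Real.rpow_le_rpow (by positivity) ?_ hspos.le
      rw [div_le_div_iff₀ ht hrpos]
      nlinarith
    exact mul_le_mul_of_nonneg_right h1 (Real.rpow_nonneg (by positivity) _)
  -- main estimate
  set B := ball x (k * r) with hB
  have hBmeas : MeasurableSet (B ∩ Ω) := measurableSet_ball.inter hΩ
  have hnonneg : ∀ y : E, 0 ≤ ‖x - y‖ ^ (-s) := fun y => Real.rpow_nonneg (norm_nonneg _) _
  have step1 : ∫ y in B ∩ Ω, ‖x - y‖ ^ (-s) ≤ ∫ y in Ω, ‖x - y‖ ^ (-s) :=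
    setIntegral_mono_set hint3 (ae_of_all _ hnonneg)
      (HasSubset.Subset.eventuallyLE Set.inter_subset_right)
  have hμB : volume (B ∩ Ω) < ⊤ :=
    lt_of_le_of_lt (measure_mono Set.inter_subset_left) measure_ball_lt_top
  have step2 : (k * r) ^ (-s) * (volume (B ∩ Ω)).toReal ≤ ∫ y in B ∩ Ω, ‖x - y‖ ^ (-s) := by
    have hbound : ∀ y ∈ B ∩ Ω, (k * r) ^ (-s) ≤ ‖x - y‖ ^ (-s) := by
      intro y hy
      have h1 : ‖x - y‖ ≤ k * r := by
        rw [← dist_eq_norm, dist_comm]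
        exact le_of_lt (mem_ball.mp hy.1)
      have h2 : 0 < ‖x - y‖ := lt_of_lt_of_le hrpos (by rw [← dist_eq_norm]; exact hav y hy.2)
      exact Real.rpow_le_rpow_of_nonpos h2 h1 (by linarith)
    have hc := setIntegral_mono_on (integrableOn_const_iff (by simp)|>.mpr (Or.inr hμB))
      (hint3.mono_set Set.inter_subset_right) hBmeas hbound
    rwa [setIntegral_const, smul_eq_mul, mul_comm] at hc
  have hvolB : volume B = ENNReal.ofReal ((k * r) ^ N) * volume (ball (0 : E) 1) := by
    rw [hB, Measure.addHaar_ball_of_pos _ x hkr, finrank_euclideanSpace_fin]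
  have hμ : δ * ((k * r) ^ N * V) ≤ (volume (B ∩ Ω)).toReal := by
    have h := ENNReal.toReal_mono hμB.ne hvol
    rwa [ENNReal.toReal_mul, ENNReal.toReal_ofReal hδ.le, hvolB, ENNReal.toReal_mul,
      ENNReal.toReal_ofReal (by positivity), ← hV] at h
  have hEq : δ * V * k ^ (-α) * r ^ (-α) = (k * r) ^ (-s) * (δ * ((k * r) ^ N * V)) := by
    have h1 : ((k * r) ^ N : ℝ) = (k * r) ^ (N : ℝ) := (Real.rpow_natCast _ N).symm
    have h2 : (k * r) ^ (-s) * (k * r) ^ (N : ℝ) = (k * r) ^ (-α) := by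
      rw [← Real.rpow_add hkr]; ring_nf
      rw [hs]; ring_nf
    have h3 : (k * r) ^ (-α) = k ^ (-α) * r ^ (-α) := Real.mul_rpow hkpos.le hrpos.le
    rw [h1]
    linear_combination (-(δ * V)) * h2 - (δ * V) * h3
  calc δ * V * k ^ (-α) * r ^ (-α) = (k * r) ^ (-s) * (δ * ((k * r) ^ N * V)) := hEq
    _ ≤ (k * r) ^ (-s) * (volume (B ∩ Ω)).toReal :=
        mul_le_mul_of_nonneg_left hμ (Real.rpow_nonneg hkr.le _)
    _ ≤ ∫ y in B ∩ Ω, ‖x - y‖ ^ (-s) := step2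
    _ ≤ ∫ y in Ω, ‖x - y‖ ^ (-s) := step1
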